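/- Let n ≥ 2, let x_1 ≤ ⋯ ≤ x_n be real numbers, and let Q : ℝ → ℝ be any function satisfying Q(t) = x_i for all t ∈ ((i−1)/n, i/n] and each i = 1, …, n. Let z_1 ≤ ⋯ ≤ z_{n−1} be real numbers with Φ(z_i) = i/n for i = 1, …, n−1. Then ∫_{ℝ} Q(Φ(z)) · z · φ(z) dz = Σ_{i=1}^{n−1} (x_{i+1} − x_i) φ(z_i). -/

import Mathlib

open MeasureTheory

/-- The standard normal density `φ(z) = (2π)^{-1/2} exp(-z²/2)`. -/
noncomputable def stdGaussianPDF (z : ℝ) : ℝ :=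
  (Real.sqrt (2 * Real.pi))⁻¹ * Real.exp (-z ^ 2 / 2)

/-- The standard normal cumulative distribution function `Φ(t) = ∫_{-∞}^t φ(z) dz`. -/
noncomputable def stdGaussianCDF (t : ℝ) : ℝ :=
  ∫ z in Set.Iic t, stdGaussianPDF z

open Set Filter

lemma pdf_eq (z : ℝ) : stdGaussianPDF z
    = (Real.sqrt (2 * Real.pi))⁻¹ * Real.exp (-(1/2 : ℝ) * z ^ 2) := by
  unfold stdGaussianPDF; ring_nf

lemma pdf_pos (z : ℝ) : 0 < stdGaussianPDF z := by
  unfold stdGaussianPDF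
  positivity

lemma pdf_cont : Continuous stdGaussianPDF := by
  unfold stdGaussianPDF
  continuity

lemma integrable_pdf : Integrable stdGaussianPDF := by
  have h := (integrable_exp_neg_mul_sq (by norm_num : (0:ℝ) < 1/2)).const_mul
    (Real.sqrt (2 * Real.pi))⁻¹
  convert h using 2 with z
  rw [pdf_eq]

lemma integrable_mul_pdf : Integrable (fun t : ℝ => t * stdGaussianPDF t) := by
  have h := (integrable_mul_exp_neg_mul_sq (by norm_num : (0:ℝ) < 1/2)).const_mul
    (Real.sqrt (2 * Real.pi))⁻¹
  convert h using 2 with z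
  rw [pdf_eq]; ring

lemma integral_pdf : ∫ z : ℝ, stdGaussianPDF z = 1 := by
  have h : ∫ z : ℝ, Real.exp (-(1/2:ℝ) * z ^ 2) = Real.sqrt (Real.pi / (1/2)) :=
    integral_gaussian (1/2)
  have : ∫ z : ℝ, stdGaussianPDF z
      = (Real.sqrt (2 * Real.pi))⁻¹ * ∫ z : ℝ, Real.exp (-(1/2:ℝ) * z ^ 2) := by
    rw [← integral_const_mul]
    congr 1 with z
    rw [pdf_eq]
  rw [this, h]
  rw [show Real.pi / (1/2) = 2 * Real.pi by ring]
  rw [inv_mul_cancel₀]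
  positivity

lemma hasDerivAt_negPdf (t : ℝ) :
    HasDerivAt (fun s => -stdGaussianPDF s) (t * stdGaussianPDF t) t := by
  have h1 : HasDerivAt (fun s : ℝ => -s ^ 2 / 2) (-t) t := by
    have := ((hasDerivAt_pow 2 t).neg).div_const 2
    exact this.congr_deriv (by push_cast; ring)
  have h2 := (h1.exp).const_mul (Real.sqrt (2 * Real.pi))⁻¹
  have h3 := h2.neg
  exact h3.congr_deriv (by unfold stdGaussianPDF; ring)

lemma tendsto_negPdf_atTop : Tendsto (fun s => -stdGaussianPDF s) atTop (nhds 0) := by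
  have h : Tendsto (fun s : ℝ => -s ^ 2 / 2) atTop atBot := by
    apply Filter.Tendsto.atBot_div_const (by norm_num)
    exact tendsto_neg_atBot_iff.mpr (tendsto_pow_atTop (by norm_num))
  have := (Real.tendsto_exp_atBot.comp h).const_mul (Real.sqrt (2 * Real.pi))⁻¹
  rw [mul_zero] at this
  have h2 := this.neg
  rw [neg_zero] at h2
  exact h2

lemma tendsto_negPdf_atBot : Tendsto (fun s => -stdGaussianPDF s) atBot (nhds 0) := by
  have h := tendsto_negPdf_atTop.comp tendsto_neg_atBot_atTop
  refine h.congr fun s => ?_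
  simp [Function.comp, stdGaussianPDF, neg_sq]

lemma integrableOn_pdf {s : Set ℝ} : IntegrableOn stdGaussianPDF s := integrable_pdf.integrableOn

lemma pos_integral_pdf {s : Set ℝ} (hs : MeasurableSet s) (h : 0 < volume s) :
    0 < ∫ z in s, stdGaussianPDF z := by
  rw [setIntegral_pos_iff_support_of_nonneg_ae
    (Filter.Eventually.of_forall fun z => (pdf_pos z).le) integrableOn_pdf]
  have : Function.support stdGaussianPDF = Set.univ := by
    ext z; simp [Function.support, (pdf_pos z).ne']
  rwa [this, Set.univ_inter]

lemma cdf_mono : Monotone stdGaussianCDF := fun a b hab =>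
  setIntegral_mono_set integrableOn_pdf
    (Filter.Eventually.of_forall fun z => (pdf_pos z).le)
    (HasSubset.Subset.eventuallyLE (Set.Iic_subset_Iic.mpr hab))

lemma cdf_strictMono : StrictMono stdGaussianCDF := by
  intro a b hab
  have key : stdGaussianCDF b - stdGaussianCDF a = ∫ z in Set.Ioc a b, stdGaussianPDF z := by
    unfold stdGaussianCDF
    rw [intervalIntegral.integral_Iic_sub_Iic integrableOn_pdf integrableOn_pdf,
      intervalIntegral.integral_of_le hab.le]
  have hpos : 0 < ∫ z in Set.Ioc a b, stdGaussianPDF z := by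
    apply pos_integral_pdf measurableSet_Ioc
    rw [Real.volume_Ioc]
    simp [hab]
  linarith
 
lemma cdf_pos (t : ℝ) : 0 < stdGaussianCDF t := by
  have h1 : 0 ≤ stdGaussianCDF (t - 1) :=
    setIntegral_nonneg measurableSet_Iic fun z _ => (pdf_pos z).le
  have h2 := cdf_strictMono (show t - 1 < t by linarith)
  linarith

lemma cdf_lt_one (t : ℝ) : stdGaussianCDF t < 1 := by
  have hsplit : stdGaussianCDF t + ∫ z in Set.Ioi t, stdGaussianPDF z = 1 := by
    unfold stdGaussianCDF
    rw [← integral_pdf]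
    exact intervalIntegral.integral_Iic_add_Ioi integrableOn_pdf integrableOn_pdf
  have hpos : 0 < ∫ z in Set.Ioi t, stdGaussianPDF z := by
    apply pos_integral_pdf measurableSet_Ioi
    simp
  linarith

lemma integral_Iic_mul (a : ℝ) :
    ∫ t in Set.Iic a, t * stdGaussianPDF t = -stdGaussianPDF a := by
  have := integral_Iic_of_hasDerivAt_of_tendsto' (f := fun s => -stdGaussianPDF s)
    (f' := fun t => t * stdGaussianPDF t) (a := a)
    (fun s _ => hasDerivAt_negPdf s) integrable_mul_pdf.integrableOn tendsto_negPdf_atBot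
  simpa using this

lemma integral_Ioi_mul (a : ℝ) :
    ∫ t in Set.Ioi a, t * stdGaussianPDF t = stdGaussianPDF a := by
  have := integral_Ioi_of_hasDerivAt_of_tendsto' (f := fun s => -stdGaussianPDF s)
    (f' := fun t => t * stdGaussianPDF t) (a := a)
    (fun s _ => hasDerivAt_negPdf s) integrable_mul_pdf.integrableOn tendsto_negPdf_atTop
  simpa using this

lemma integral_Ioc_mul {a b : ℝ} (h : a ≤ b) :
    ∫ t in Set.Ioc a b, t * stdGaussianPDF t = stdGaussianPDF a - stdGaussianPDF b := by
  rw [← intervalIntegral.integral_of_le h]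
  have := intervalIntegral.integral_eq_sub_of_hasDerivAt
    (f := fun s => -stdGaussianPDF s) (f' := fun t => t * stdGaussianPDF t) (a := a) (b := b)
    (fun s _ => hasDerivAt_negPdf s) integrable_mul_pdf.intervalIntegrable
  rw [this]; ring

/-- If `Q` is the empirical quantile function of sorted reals
`x 1 ≤ ⋯ ≤ x n` and `z 1 ≤ ⋯ ≤ z (n-1)` are Gaussian quantiles with `Φ (z i) = i/n`,
then `∫_ℝ Q(Φ(z)) z φ(z) dz = Σ_{i=1}^{n-1} (x (i+1) - x i) φ(z i)`. -/
theorem integral_quantile_linear_gaussian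
    (n : ℕ) (hn : 2 ≤ n) (x : ℕ → ℝ)
    (hxmono : ∀ i, 1 ≤ i → i < n → x i ≤ x (i + 1))
    (Q : ℝ → ℝ)
    (hQ : ∀ i, 1 ≤ i → i ≤ n → ∀ t : ℝ,
        ((i : ℝ) - 1) / n < t → t ≤ (i : ℝ) / n → Q t = x i)
    (z : ℕ → ℝ)
    (hzmono : ∀ i, 1 ≤ i → i + 1 ≤ n - 1 → z i ≤ z (i + 1))
    (hz : ∀ i, 1 ≤ i → i ≤ n - 1 → stdGaussianCDF (z i) = (i : ℝ) / n) :
    ∫ t : ℝ, Q (stdGaussianCDF t) * t * stdGaussianPDF t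
      = ∑ i ∈ Finset.Icc 1 (n - 1), (x (i + 1) - x i) * stdGaussianPDF (z i) := by
  have hn0 : (0:ℝ) < (n:ℝ) := by exact_mod_cast (by omega : 0 < n)
  -- region lemmas
  have hQ1 : ∀ t, t ≤ z 1 → Q (stdGaussianCDF t) = x 1 := by
    intro t ht
    apply hQ 1 le_rfl (by omega)
    · have := cdf_pos t
      push_cast
      simpa using this
    · have h1 : stdGaussianCDF (z 1) = 1 / (n:ℝ) := by
        have := hz 1 le_rfl (by omega); simpa using this
      have := cdf_mono ht
      push_cast
      linarith [h1 ▸ this]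
  have hQmid : ∀ i, 1 ≤ i → i + 1 ≤ n - 1 → ∀ t, z i < t → t ≤ z (i+1) →
      Q (stdGaussianCDF t) = x (i+1) := by
    intro i h1 h2 t ht1 ht2
    apply hQ (i+1) (by omega) (by omega)
    · have hzi := hz i h1 (by omega)
      have hlt := cdf_strictMono ht1
      rw [hzi] at hlt
      push_cast
      calc ((i:ℝ) + 1 - 1) / n = (i:ℝ)/n := by ring
        _ < _ := hlt
    · have hzi := hz (i+1) (by omega) h2
      have hle := cdf_mono ht2
      rw [hzi] at hle
      push_cast
      push_cast at hle
      exact hle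
  have hQtop : ∀ t, z (n-1) < t → Q (stdGaussianCDF t) = x n := by
    intro t ht
    apply hQ n (by omega) le_rfl
    · have hzn := hz (n-1) (by omega) le_rfl
      have hc : ((n-1:ℕ):ℝ) = (n:ℝ) - 1 := by
        push_cast [Nat.cast_sub (by omega : 1 ≤ n)]; ring
      have hlt := cdf_strictMono ht
      rw [hzn, hc] at hlt
      exact hlt
    · rw [div_self hn0.ne']
      exact (cdf_lt_one t).le
  -- index representation
  have hidx : ∀ t : ℝ, 1 ≤ ⌈stdGaussianCDF t * n⌉₊ ∧ ⌈stdGaussianCDF t * n⌉₊ ≤ n ∧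
      Q (stdGaussianCDF t) = x ⌈stdGaussianCDF t * n⌉₊ := by
    intro t
    set a := stdGaussianCDF t * n with ha
    have ha0 : 0 < a := mul_pos (cdf_pos t) hn0
    have han : a ≤ (n:ℝ) := by
      have := (cdf_lt_one t).le
      calc a ≤ 1 * n := by
            apply mul_le_mul_of_nonneg_right this hn0.le
        _ = (n:ℝ) := one_mul _
    have hi1 : 1 ≤ ⌈a⌉₊ := Nat.ceil_pos.mpr ha0
    have hin : ⌈a⌉₊ ≤ n := Nat.ceil_le.mpr han
    refine ⟨hi1, hin, ?_⟩
    apply hQ ⌈a⌉₊ hi1 hin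
    · rw [div_lt_iff₀ hn0]
      have := Nat.ceil_lt_add_one ha0.le
      linarith
    · rw [le_div_iff₀ hn0]
      exact Nat.le_ceil a
  set f := fun t : ℝ => Q (stdGaussianCDF t) * t * stdGaussianPDF t with hf_def
  -- integrability
  have hΦmeas : Measurable stdGaussianCDF := cdf_mono.measurable
  have hQmeas : Measurable fun t => Q (stdGaussianCDF t) := by
    have he : (fun t => Q (stdGaussianCDF t))
        = fun t => x ⌈stdGaussianCDF t * n⌉₊ := funext fun t => (hidx t).2.2
    rw [he]
    exact measurable_from_top.comp ((hΦmeas.mul_const _).nat_ceil)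
  have hfmeas : Measurable f := (hQmeas.mul measurable_id).mul pdf_cont.measurable
  have hne : (Finset.Icc 1 n).Nonempty := ⟨1, by simp; omega⟩
  set C : ℝ := (Finset.Icc 1 n).sup' hne (fun i => |x i|) with hC
  have hQbd : ∀ t, |Q (stdGaussianCDF t)| ≤ C := by
    intro t
    obtain ⟨h1, h2, h3⟩ := hidx t
    rw [h3]
    exact Finset.le_sup' (fun i => |x i|) (Finset.mem_Icc.mpr ⟨h1, h2⟩)
  have hint : Integrable f := by
    apply Integrable.mono' ((integrable_mul_pdf.abs).const_mul C)
      hfmeas.aestronglyMeasurable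
    filter_upwards with t
    rw [Real.norm_eq_abs]
    calc |f t| = |Q (stdGaussianCDF t)| * |t * stdGaussianPDF t| := by
          rw [hf_def]; simp only; rw [mul_assoc, abs_mul]
      _ ≤ C * |t * stdGaussianPDF t| :=
          mul_le_mul_of_nonneg_right (hQbd t) (abs_nonneg _)
  -- piece integrals
  have hIic : ∫ t in Set.Iic (z 1), f t = x 1 * (-stdGaussianPDF (z 1)) := by
    rw [setIntegral_congr_fun measurableSet_Iic
      (g := fun t => x 1 * (t * stdGaussianPDF t))
      (fun t ht => by simp only [hf_def]; rw [hQ1 t ht]; ring)]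
    rw [integral_const_mul, integral_Iic_mul]
  have hIoiTop : ∫ t in Set.Ioi (z (n-1)), f t = x n * stdGaussianPDF (z (n-1)) := by
    rw [setIntegral_congr_fun measurableSet_Ioi
      (g := fun t => x n * (t * stdGaussianPDF t))
      (fun t ht => by simp only [hf_def]; rw [hQtop t ht]; ring)]
    rw [integral_const_mul, integral_Ioi_mul]
  have hIoc : ∀ i, 1 ≤ i → i + 1 ≤ n - 1 →
      ∫ t in Set.Ioc (z i) (z (i+1)), f t
        = x (i+1) * (stdGaussianPDF (z i) - stdGaussianPDF (z (i+1))) := by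
    intro i h1 h2
    rw [setIntegral_congr_fun measurableSet_Ioc
      (g := fun t => x (i+1) * (t * stdGaussianPDF t))
      (fun t ht => by simp only [hf_def]; rw [hQmid i h1 h2 t ht.1 ht.2]; ring)]
    rw [integral_const_mul, integral_Ioc_mul (hzmono i h1 h2)]
  -- downward induction
  have key : ∀ d, d ≤ n - 2 → ∫ t in Set.Ioi (z (n-1-d)), f t
      = x (n-1-d+1) * stdGaussianPDF (z (n-1-d))
        + ∑ i ∈ Finset.Icc (n-1-d+1) (n-1), (x (i+1) - x i) * stdGaussianPDF (z i) := by
    intro d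
    induction d with
    | zero =>
      intro _
      simp only [Nat.sub_zero]
      have h1 : n - 1 + 1 = n := by omega
      rw [h1, hIoiTop, Finset.Icc_eq_empty (by omega), Finset.sum_empty, add_zero]
    | succ d ih =>
      intro hd
      set m := n - 1 - (d+1) with hm
      have hm1 : 1 ≤ m := by omega
      have hm2 : m + 1 ≤ n - 1 := by omega
      have hmd : n - 1 - d = m + 1 := by omega
      have hzm : z m ≤ z (m+1) := hzmono m hm1 hm2
      have hsplit : ∫ t in Set.Ioi (z m), f t
          = (∫ t in Set.Ioc (z m) (z (m+1)), f t) + ∫ t in Set.Ioi (z (m+1)), f t := by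
        rw [← Set.Ioc_union_Ioi_eq_Ioi hzm,
          setIntegral_union (Set.Ioc_disjoint_Ioi le_rfl) measurableSet_Ioi
            hint.integrableOn hint.integrableOn]
      rw [hmd] at ih
      rw [hsplit, hIoc m hm1 hm2, ih (by omega)]
      have hins : Finset.Icc (m+1) (n-1) = insert (m+1) (Finset.Icc (m+1+1) (n-1)) := by
        ext j; simp only [Finset.mem_Icc, Finset.mem_insert]; omega
      rw [hins, Finset.sum_insert (by simp only [Finset.mem_Icc]; omega)]
      ring
  have hS1 : ∫ t in Set.Ioi (z 1), f t
      = x 2 * stdGaussianPDF (z 1)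
        + ∑ i ∈ Finset.Icc 2 (n-1), (x (i+1) - x i) * stdGaussianPDF (z i) := by
    have hk := key (n-2) le_rfl
    have e : n - 1 - (n-2) = 1 := by omega
    rw [e] at hk
    exact hk
  have hmain : ∫ t : ℝ, f t = (∫ t in Set.Iic (z 1), f t) + ∫ t in Set.Ioi (z 1), f t :=
    (intervalIntegral.integral_Iic_add_Ioi hint.integrableOn hint.integrableOn).symm
  show ∫ t : ℝ, f t = _
  rw [hmain, hIic, hS1]
  have hins : Finset.Icc 1 (n-1) = insert 1 (Finset.Icc 2 (n-1)) := by
    ext j; simp only [Finset.mem_Icc, Finset.mem_insert]; omega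
  rw [hins, Finset.sum_insert (by simp only [Finset.mem_Icc]; omega)]
  ring
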